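/- In the two-player interconnected contest with Tullock contest success function with parameter γ ∈ (0,1], in every Nash equilibrium (e_1, e_2), and for any pair of spillover matrices, the total effort of each player i ∈ {1,2} obeys the upper bound Σ_{k∈B} e_i^k ≤ (γ/(4 c_i)) Σ_{k∈B} v^k. -/
import Mathlib


open Finset Matrix

/-- Effective effort of a player with spillover matrix `ρ` and effort vector `e`
at battlefield `k`: `y^k = e^k + ∑_{l ≠ k} ρ^{l,k} e^l`. -/
noncomputable def effY {m : ℕ} (ρ : Matrix (Fin m) (Fin m) ℝ) (e : Fin m → ℝ)
    (k : Fin m) : ℝ :=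
  e k + ∑ l ∈ Finset.univ.erase k, ρ l k * e l

/-- Tullock contest success function with parameter `γ`.  When both effective
efforts are `0` this gives `0/0 = 0`, matching the convention. -/
noncomputable def tullock (γ y₁ y₂ : ℝ) : ℝ :=
  y₁ ^ γ / (y₁ ^ γ + y₂ ^ γ)

/-- Payoff of player `i` in the interconnected contest. -/
noncomputable def payoff {m : ℕ} (γ : ℝ) (v : Fin m → ℝ) (c : Fin 2 → ℝ)
    (ρ : Fin 2 → Matrix (Fin m) (Fin m) ℝ) (e : Fin 2 → Fin m → ℝ) (i : Fin 2) : ℝ :=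
  (∑ k, v k * tullock γ (effY (ρ i) (e i) k) (effY (ρ (1 - i)) (e (1 - i)) k))
    - c i * ∑ k, e i k

/-- Pure strategy Nash equilibrium of the interconnected contest:
nonnegative efforts, and no profitable deviation to any nonnegative effort vector. -/
def IsNashEq {m : ℕ} (γ : ℝ) (v : Fin m → ℝ) (c : Fin 2 → ℝ)
    (ρ : Fin 2 → Matrix (Fin m) (Fin m) ℝ) (e : Fin 2 → Fin m → ℝ) : Prop :=
  (∀ i k, 0 ≤ e i k) ∧
  ∀ (i : Fin 2) (e' : Fin m → ℝ), (∀ k, 0 ≤ e' k) →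
    payoff γ v c ρ (Function.update e i e') i ≤ payoff γ v c ρ e i

/-- Winning probability of player `i` at battlefield `k` under profile `e`. -/
noncomputable def eqProb {m : ℕ} (γ : ℝ) (ρ : Fin 2 → Matrix (Fin m) (Fin m) ℝ)
    (e : Fin 2 → Fin m → ℝ) (i : Fin 2) (k : Fin m) : ℝ :=
  tullock γ (effY (ρ i) (e i) k) (effY (ρ (1 - i)) (e (1 - i)) k)

open Filter Topology

theorem keyineq (a b s : ℝ) (ha : 0 ≤ a) (hb : 0 ≤ b) (hs0 : 0 < s) (hs1 : s ≤ 1) :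
    a/(a+b) - a*s/(a*s+b) ≤ (1-s)/(4*s) := by
  have hrhs : 0 ≤ (1-s)/(4*s) := div_nonneg (by linarith) (by positivity)
  rcases eq_or_lt_of_le ha with h|ha'
  · simpa [← h] using hrhs
  · rcases eq_or_lt_of_le hb with h|hb'
    · rw [← h, add_zero, add_zero, div_self ha'.ne', div_self (by positivity), sub_self]
      exact hrhs
    · have h1 : 0 < a + b := by linarith
      have h2 : 0 < a*s + b := by positivity
      rw [div_sub_div _ _ h1.ne' h2.ne', div_le_div_iff₀ (by positivity) (by positivity)]
      nlinarith [mul_nonneg (mul_nonneg (sub_nonneg.2 hs1) hs0.le) (sq_nonneg (a-b)),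
        mul_nonneg (mul_nonneg (sq_nonneg (1-s)) h1.le) hb]

theorem limlem (γ : ℝ) :
    Tendsto (fun t : ℝ => (1 - t ^ γ) / (1 - t) * (1 / (4 * t ^ γ)))
      (𝓝[<] (1:ℝ)) (𝓝 (γ / 4)) := by
  have hslope : Tendsto (fun t : ℝ => (1 - t ^ γ) / (1 - t)) (𝓝[<] (1:ℝ)) (𝓝 γ) := by
    have hd : HasDerivAt (fun t : ℝ => t ^ γ) γ 1 := by
      simpa using Real.hasDerivAt_rpow_const (x := 1) (p := γ) (Or.inl one_ne_zero)
    have h2 : Tendsto (slope (fun t : ℝ => t ^ γ) 1) (𝓝[<] (1:ℝ)) (𝓝 γ) :=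
      (hasDerivAt_iff_tendsto_slope.mp hd).mono_left
        (nhdsWithin_mono 1 (fun x hx => ne_of_lt hx))
    refine h2.congr (fun t => ?_)
    simp only [slope, Real.one_rpow, vsub_eq_sub, smul_eq_mul]
    rw [← neg_div_neg_eq, neg_sub, neg_sub, div_eq_inv_mul]
  have hpow : Tendsto (fun t : ℝ => 1 / (4 * t ^ γ)) (𝓝[<] (1:ℝ)) (𝓝 (1/4)) := by
    have hc : ContinuousAt (fun t : ℝ => t ^ γ) 1 :=
      Real.continuousAt_rpow_const 1 γ (Or.inl one_ne_zero)
    have : Tendsto (fun t : ℝ => 1 / (4 * t ^ γ)) (𝓝 (1:ℝ)) (𝓝 (1 / (4 * (1:ℝ) ^ γ))) := by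
      apply Tendsto.div tendsto_const_nhds ((tendsto_const_nhds).mul hc)
      simp [Real.one_rpow]
    simpa [Real.one_rpow] using this.mono_left nhdsWithin_le_nhds
  simpa [div_eq_mul_inv, mul_comm] using hslope.mul hpow

theorem effY_nonneg {m : ℕ} (ρ : Matrix (Fin m) (Fin m) ℝ) (e : Fin m → ℝ)
    (hρ : ∀ k l, 0 ≤ ρ k l) (he : ∀ k, 0 ≤ e k) (k : Fin m) : 0 ≤ effY ρ e k :=
  add_nonneg (he k) (Finset.sum_nonneg fun l _ => mul_nonneg (hρ l k) (he l))

theorem effY_smul {m : ℕ} (ρ : Matrix (Fin m) (Fin m) ℝ) (e : Fin m → ℝ) (t : ℝ)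
    (k : Fin m) : effY ρ (fun l => t * e l) k = t * effY ρ e k := by
  simp only [effY, mul_add, Finset.mul_sum]
  congr 1
  exact Finset.sum_congr rfl fun l _ => by ring


/-- upper bound on equilibrium total effort. -/
theorem equilibrium_total_effort_upper_bound (m : ℕ) (γ : ℝ) (hγ0 : 0 < γ) (hγ1 : γ ≤ 1)
    (v : Fin m → ℝ) (hv : ∀ k, 0 < v k)
    (c : Fin 2 → ℝ) (hc : ∀ i, 0 < c i)
    (ρ : Fin 2 → Matrix (Fin m) (Fin m) ℝ)
    (hρ : ∀ i k l, 0 ≤ ρ i k l) (hρd : ∀ i k, ρ i k k = 0)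
    (e : Fin 2 → Fin m → ℝ) (he : IsNashEq γ v c ρ e) (i : Fin 2) :
    ∑ k, e i k ≤ (γ / (4 * c i)) * ∑ k, v k := by
  set S := ∑ k, e i k with hS
  set V := ∑ k, v k with hV
  have hne : (1 - i) ≠ i := by fin_cases i <;> decide
  -- main inequality for every t ∈ (0,1)
  have hmain : ∀ t : ℝ, t ∈ Set.Ioo (0:ℝ) 1 →
      c i * S ≤ (1 - t ^ γ) / (1 - t) * (1 / (4 * t ^ γ)) * V := by
    intro t ht
    obtain ⟨ht0, ht1⟩ := ht
    have hs0 : 0 < t ^ γ := Real.rpow_pos_of_pos ht0 γ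
    have hs1 : t ^ γ ≤ 1 := Real.rpow_le_one ht0.le ht1.le hγ0.le
    have hdev := he.2 i (fun l => t * e i l) (fun l => mul_nonneg ht0.le (he.1 i l))
    simp only [payoff, Function.update_self, Function.update_of_ne hne] at hdev
    rw [← Finset.mul_sum] at hdev
    -- pointwise bound on the probability drop
    have hpt : ∀ k : Fin m,
        tullock γ (effY (ρ i) (e i) k) (effY (ρ (1-i)) (e (1-i)) k)
          - tullock γ (effY (ρ i) (fun l => t * e i l) k) (effY (ρ (1-i)) (e (1-i)) k)
          ≤ (1 - t ^ γ) / (4 * t ^ γ) := by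
      intro k
      have hy1 : 0 ≤ effY (ρ i) (e i) k := effY_nonneg _ _ (hρ i) (he.1 i) k
      have hy2 : 0 ≤ effY (ρ (1-i)) (e (1-i)) k := effY_nonneg _ _ (hρ (1-i)) (he.1 (1-i)) k
      rw [effY_smul]
      have hmul : (t * effY (ρ i) (e i) k) ^ γ = effY (ρ i) (e i) k ^ γ * t ^ γ := by
        rw [Real.mul_rpow ht0.le hy1, mul_comm]
      simp only [tullock, hmul]
      exact keyineq _ _ _ (Real.rpow_nonneg hy1 γ) (Real.rpow_nonneg hy2 γ) hs0 hs1
    have hsum : ∑ k, v k * tullock γ (effY (ρ i) (e i) k) (effY (ρ (1-i)) (e (1-i)) k)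
        - ∑ k, v k * tullock γ (effY (ρ i) (fun l => t * e i l) k)
            (effY (ρ (1-i)) (e (1-i)) k)
        ≤ (1 - t ^ γ) / (4 * t ^ γ) * V := by
      rw [← Finset.sum_sub_distrib, hV, Finset.mul_sum]
      refine Finset.sum_le_sum fun k _ => ?_
      rw [← mul_sub, mul_comm ((1 - t ^ γ) / (4 * t ^ γ))]
      exact mul_le_mul_of_nonneg_left (hpt k) (hv k).le
    have hct : c i * (1 - t) * S ≤ (1 - t ^ γ) / (4 * t ^ γ) * V := by
      nlinarith [hdev, hsum]
    have h1t : 0 < 1 - t := by linarith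
    rw [show (1 - t ^ γ) / (1 - t) * (1 / (4 * t ^ γ)) * V
        = ((1 - t ^ γ) / (4 * t ^ γ) * V) / (1 - t) by rw [div_mul_eq_mul_div, div_mul_eq_mul_div, mul_one_div],
      le_div_iff₀ h1t]
    nlinarith [hct]
  -- take the limit t → 1⁻
  have hlim : Tendsto (fun t : ℝ => (1 - t ^ γ) / (1 - t) * (1 / (4 * t ^ γ)) * V)
      (𝓝[<] (1:ℝ)) (𝓝 (γ / 4 * V)) := (limlem γ).mul_const V
  have hev : ∀ᶠ t in 𝓝[<] (1:ℝ),
      c i * S ≤ (1 - t ^ γ) / (1 - t) * (1 / (4 * t ^ γ)) * V := by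
    filter_upwards [Ioo_mem_nhdsLT_of_mem (by constructor <;> norm_num :
      (1:ℝ) ∈ Set.Ioc (0:ℝ) 1)] with t ht using hmain t ht
  have hfin : c i * S ≤ γ / 4 * V := ge_of_tendsto hlim hev
  have hci := hc i
  rw [div_mul_eq_mul_div, le_div_iff₀ (by positivity)]
  nlinarith [hfin]
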